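/- Let t ↦ π^t (t ≥ 0) be a differentiable trajectory in Δ°(A₁) × Δ°(A₂) following the replicator–mutator dynamics with mutation parameter μ > 0 and reference strategies c_i ∈ Δ°(A_i), let π^μ be a stationary point of these dynamics, and set ξ = min_{i∈{1,2}, a_i∈A_i} c_i(a_i)/π_i^μ(a_i). Then the trajectory converges to the stationary point exponentially fast: for all t ≥ 0, KL(π^μ, π^t) ≤ KL(π^μ, π^0) · exp(−μ ξ t). -/

import Mathlib

open Finset

noncomputable section

variable {A1 A2 : Type*}

/-- Expected utility of the strategy profile `(p1, p2)` under utility function `u`. -/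
def eV [Fintype A1] [Fintype A2] (u : A1 → A2 → ℝ) (p1 : A1 → ℝ) (p2 : A2 → ℝ) : ℝ :=
  ∑ a1, ∑ a2, p1 a1 * p2 a2 * u a1 a2

/-- Conditional expected utility of action `a1` for player 1. -/
def cV1 [Fintype A2] (u : A1 → A2 → ℝ) (p2 : A2 → ℝ) (a1 : A1) : ℝ :=
  ∑ a2, p2 a2 * u a1 a2

/-- Conditional expected utility of action `a2` for player 2. -/
def cV2 [Fintype A1] (u : A1 → A2 → ℝ) (p1 : A1 → ℝ) (a2 : A2) : ℝ :=
  ∑ a1, p1 a1 * u a1 a2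

/-- Kullback–Leibler divergence (with the convention `0 ln 0 = 0`,
which holds since `Real.log 0 = 0` in Lean). -/
def KLd {A : Type*} [Fintype A] (p q : A → ℝ) : ℝ :=
  ∑ a, p a * Real.log (p a / q a)

/-- Bregman divergence associated with a differentiable function `ψ`. -/
def breg {A : Type*} [Fintype A] (ψ : (A → ℝ) → ℝ) (x y : A → ℝ) : ℝ :=
  ψ x - ψ y - fderiv ℝ ψ y (x - y)

/-- Euclidean inner product on `A → ℝ`. -/
def ip {A : Type*} [Fintype A] (z p : A → ℝ) : ℝ := ∑ a, z a * p a

set_option linter.unusedSectionVars false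

section Helpers

/-- From stationarity, express the stationary conditional value. -/
lemma stat_eq {A : Type*} [Fintype A] (pm c gm : A → ℝ) (vm μ : ℝ)
    (hpm : ∀ a, pm a ≠ 0)
    (hst : ∀ a, pm a * (gm a - vm) + μ * (c a - pm a) = 0) :
    ∀ a, gm a = vm - μ * (c a / pm a - 1) := by
  intro a
  have h := hst a
  have hpa := hpm a
  field_simp
  nlinarith [h]

/-- Weighted sum of the stationary conditional value. -/
lemma stat_sum {A : Type*} [Fintype A] (pm p c gm : A → ℝ) (vm μ : ℝ)
    (hpm : ∀ a, pm a ≠ 0)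
    (hp1 : ∑ a, p a = 1) (hc1 : ∑ a, c a = 1)
    (hst : ∀ a, pm a * (gm a - vm) + μ * (c a - pm a) = 0) :
    ∑ a, p a * gm a = vm - μ * ∑ a, ((p a - pm a) * (c a / pm a)) := by
  have hg := stat_eq pm c gm vm μ hpm hst
  have h1 : ∑ a, p a * gm a
      = ∑ a, (p a * vm - μ * (p a * (c a / pm a)) + μ * p a) := by
    apply Finset.sum_congr rfl
    intro a _
    rw [hg a]; ring
  have h2 : ∑ a, ((p a - pm a) * (c a / pm a))
      = ∑ a, (p a * (c a / pm a)) - 1 := by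
    rw [← hc1, ← Finset.sum_sub_distrib]
    apply Finset.sum_congr rfl
    intro a _
    have hca : pm a * (c a / pm a) = c a := by rw [mul_div_cancel₀ _ (hpm a)]
    rw [sub_mul, hca]
  rw [h1, h2, Finset.sum_add_distrib, Finset.sum_sub_distrib,
    ← Finset.sum_mul, ← Finset.mul_sum, ← Finset.mul_sum, hp1]
  ring

lemma eV_cV1 [Fintype A1] [Fintype A2] (u : A1 → A2 → ℝ) (p1 : A1 → ℝ) (p2 : A2 → ℝ) :
    eV u p1 p2 = ∑ a1, p1 a1 * cV1 u p2 a1 := by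
  unfold eV cV1
  exact Finset.sum_congr rfl fun a1 _ => by
    rw [Finset.mul_sum]; exact Finset.sum_congr rfl fun a2 _ => by ring

lemma eV_cV2 [Fintype A1] [Fintype A2] (u : A1 → A2 → ℝ) (p1 : A1 → ℝ) (p2 : A2 → ℝ) :
    eV u p1 p2 = ∑ a2, p2 a2 * cV2 u p1 a2 := by
  unfold eV cV2
  rw [Finset.sum_comm]
  exact Finset.sum_congr rfl fun a2 _ => by
    rw [Finset.mul_sum]; exact Finset.sum_congr rfl fun a1 _ => by ring

lemma eV_neg [Fintype A1] [Fintype A2] (u1 u2 : A1 → A2 → ℝ)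
    (hzs : ∀ a1 a2, u2 a1 a2 = -u1 a1 a2) (q1 : A1 → ℝ) (q2 : A2 → ℝ) :
    eV u2 q1 q2 = -eV u1 q1 q2 := by
  unfold eV
  rw [← Finset.sum_neg_distrib]
  exact Finset.sum_congr rfl fun a1 _ => by
    rw [← Finset.sum_neg_distrib]
    exact Finset.sum_congr rfl fun a2 _ => by rw [hzs]; ring

lemma cV2_neg [Fintype A1] [Fintype A2] (u1 u2 : A1 → A2 → ℝ)
    (hzs : ∀ a1 a2, u2 a1 a2 = -u1 a1 a2) (q1 : A1 → ℝ) (a2 : A2) :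
    cV2 u1 q1 a2 = -cV2 u2 q1 a2 := by
  unfold cV2
  rw [← Finset.sum_neg_distrib]
  exact Finset.sum_congr rfl fun a1 _ => by rw [hzs]; ring

lemma cV1_neg [Fintype A1] [Fintype A2] (u1 u2 : A1 → A2 → ℝ)
    (hzs : ∀ a1 a2, u2 a1 a2 = -u1 a1 a2) (q2 : A2 → ℝ) (a1 : A1) :
    cV1 u2 q2 a1 = -cV1 u1 q2 a1 := by
  unfold cV1
  rw [← Finset.sum_neg_distrib]
  exact Finset.sum_congr rfl fun a2 _ => by rw [hzs]; ring

/-- KL is bounded by the χ² divergence. -/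
lemma kl_le_chisq {A : Type*} [Fintype A] (pm p : A → ℝ)
    (hpm : ∀ a, 0 ≤ pm a) (hp : ∀ a, 0 < p a)
    (hpm1 : ∑ a, pm a = 1) (hp1 : ∑ a, p a = 1) :
    KLd pm p ≤ ∑ a, (p a - pm a) ^ 2 / p a := by
  have step1 : KLd pm p ≤ ∑ a, pm a * (pm a / p a - 1) := by
    apply Finset.sum_le_sum
    intro a _
    rcases eq_or_lt_of_le (hpm a) with h | h
    · simp [← h]
    · have hpos : 0 < pm a / p a := div_pos h (hp a)
      have := Real.log_le_sub_one_of_pos hpos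
      nlinarith
  have step2 : ∑ a, pm a * (pm a / p a - 1)
      = ∑ a, ((p a - pm a) ^ 2 / p a) - (∑ a, (p a - pm a)) := by
    rw [← Finset.sum_sub_distrib]
    apply Finset.sum_congr rfl
    intro a _
    have := (hp a).ne'
    field_simp
    ring
  have step3 : ∑ a, (p a - pm a) = 0 := by
    rw [Finset.sum_sub_distrib, hp1, hpm1]; ring
  rw [step2, step3] at step1
  linarith

/-- Per-player combination step. -/
lemma combine_player {A : Type*} [Fintype A] (pm p c : A → ℝ)
    (hpm : ∀ a, pm a ≠ 0) (hp : ∀ a, p a ≠ 0) (hc1 : ∑ a, c a = 1) :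
    ∑ a, ((p a - pm a) * (c a / pm a)) + ((∑ a, pm a * (c a / p a)) - 1)
      = ∑ a, c a * (p a / pm a + pm a / p a - 2) := by
  rw [← hc1, ← Finset.sum_sub_distrib, ← Finset.sum_add_distrib]
  apply Finset.sum_congr rfl
  intro a _
  have h1 := hpm a
  have h2 := hp a
  field_simp
  ring

/-- Per-player lower bound: the dissipation term dominates ξ · KL. -/
lemma player_bound {A : Type*} [Fintype A] (pm p c : A → ℝ) (ξ : ℝ)
    (hpm : ∀ a, 0 < pm a) (hp : ∀ a, 0 < p a)
    (hpm1 : ∑ a, pm a = 1) (hp1 : ∑ a, p a = 1)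
    (hξ0 : 0 ≤ ξ) (hξ : ∀ a, ξ ≤ c a / pm a) :
    ξ * KLd pm p ≤ ∑ a, c a * (p a / pm a + pm a / p a - 2) := by
  have h1 : ∑ a, c a * (p a / pm a + pm a / p a - 2)
      = ∑ a, (c a / pm a) * ((p a - pm a) ^ 2 / p a) := by
    apply Finset.sum_congr rfl
    intro a _
    have h1 := (hpm a).ne'
    have h2 := (hp a).ne'
    field_simp
    ring_nf
  have h2 : ξ * (∑ a, (p a - pm a) ^ 2 / p a)
      ≤ ∑ a, (c a / pm a) * ((p a - pm a) ^ 2 / p a) := by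
    rw [Finset.mul_sum]
    apply Finset.sum_le_sum
    intro a _
    exact mul_le_mul_of_nonneg_right (hξ a) (div_nonneg (sq_nonneg _) (hp a).le)
  have h3 := kl_le_chisq pm p (fun a => (hpm a).le) hp hpm1 hp1
  calc ξ * KLd pm p ≤ ξ * ∑ a, (p a - pm a) ^ 2 / p a :=
        mul_le_mul_of_nonneg_left h3 hξ0
    _ ≤ _ := by rw [h1]; exact h2

lemma split_player {A : Type*} [Fintype A] (pm p c g : A → ℝ) (v μ : ℝ)
    (hp : ∀ a, p a ≠ 0) (hs_pm : ∑ a, pm a = 1) :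
    ∑ a, pm a * ((p a * (g a - v) + μ * (c a - p a)) / p a)
      = (∑ a, pm a * g a) - v + μ * ((∑ a, pm a * (c a / p a)) - 1) := by
  have e : ∀ a ∈ Finset.univ, pm a * ((p a * (g a - v) + μ * (c a - p a)) / p a)
      = pm a * g a - pm a * v + (μ * (pm a * (c a / p a)) - μ * pm a) := by
    intro a _
    have := hp a
    field_simp
  rw [Finset.sum_congr rfl e, Finset.sum_add_distrib, Finset.sum_sub_distrib,
    Finset.sum_sub_distrib, ← Finset.sum_mul, ← Finset.mul_sum, ← Finset.mul_sum, hs_pm]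
  ring

/-- The grand Lyapunov identity at a fixed time. -/
lemma grand_identity [Fintype A1] [Fintype A2]
    (u1 u2 : A1 → A2 → ℝ) (hzs : ∀ a1 a2, u2 a1 a2 = -u1 a1 a2) (μ : ℝ)
    (c1 p1 pm1 : A1 → ℝ) (c2 p2 pm2 : A2 → ℝ)
    (hpm1 : ∀ a, pm1 a ≠ 0) (hpm2 : ∀ a, pm2 a ≠ 0)
    (hp1 : ∀ a, p1 a ≠ 0) (hp2 : ∀ a, p2 a ≠ 0)
    (hs_p1 : ∑ a, p1 a = 1) (hs_p2 : ∑ a, p2 a = 1)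
    (hs_pm1 : ∑ a, pm1 a = 1) (hs_pm2 : ∑ a, pm2 a = 1)
    (hs_c1 : ∑ a, c1 a = 1) (hs_c2 : ∑ a, c2 a = 1)
    (hst1 : ∀ a, pm1 a * (cV1 u1 pm2 a - eV u1 pm1 pm2) + μ * (c1 a - pm1 a) = 0)
    (hst2 : ∀ a, pm2 a * (cV2 u2 pm1 a - eV u2 pm1 pm2) + μ * (c2 a - pm2 a) = 0) :
    (∑ a, pm1 a * ((p1 a * (cV1 u1 p2 a - eV u1 p1 p2) + μ * (c1 a - p1 a)) / p1 a))
      + (∑ a, pm2 a * ((p2 a * (cV2 u2 p1 a - eV u2 p1 p2) + μ * (c2 a - p2 a)) / p2 a))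
      = μ * ((∑ a, c1 a * (p1 a / pm1 a + pm1 a / p1 a - 2))
          + (∑ a, c2 a * (p2 a / pm2 a + pm2 a / p2 a - 2))) := by
  rw [split_player pm1 p1 c1 (cV1 u1 p2) (eV u1 p1 p2) μ hp1 hs_pm1,
      split_player pm2 p2 c2 (cV2 u2 p1) (eV u2 p1 p2) μ hp2 hs_pm2]
  have g1 : ∑ a, pm1 a * cV1 u1 p2 a
      = eV u1 pm1 pm2 + μ * ∑ a, ((p2 a - pm2 a) * (c2 a / pm2 a)) := by
    rw [← eV_cV1 u1 pm1 p2, eV_cV2 u1 pm1 p2]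
    have e : ∀ a ∈ Finset.univ, p2 a * cV2 u1 pm1 a = -(p2 a * cV2 u2 pm1 a) := by
      intro a _; rw [cV2_neg u1 u2 hzs]; ring
    rw [Finset.sum_congr rfl e, Finset.sum_neg_distrib,
      stat_sum pm2 p2 c2 (cV2 u2 pm1) (eV u2 pm1 pm2) μ hpm2 hs_p2 hs_c2 hst2,
      eV_neg u1 u2 hzs pm1 pm2]
    ring
  have g2 : ∑ a, pm2 a * cV2 u2 p1 a
      = -(eV u1 pm1 pm2) + μ * ∑ a, ((p1 a - pm1 a) * (c1 a / pm1 a)) := by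
    rw [← eV_cV2 u2 p1 pm2, eV_cV1 u2 p1 pm2]
    have e : ∀ a ∈ Finset.univ, p1 a * cV1 u2 pm2 a = -(p1 a * cV1 u1 pm2 a) := by
      intro a _; rw [cV1_neg u1 u2 hzs]; ring
    rw [Finset.sum_congr rfl e, Finset.sum_neg_distrib,
      stat_sum pm1 p1 c1 (cV1 u1 pm2) (eV u1 pm1 pm2) μ hpm1 hs_p1 hs_c1 hst1]
    ring
  rw [g1, g2, eV_neg u1 u2 hzs p1 p2,
    ← combine_player pm1 p1 c1 hpm1 hp1 hs_c1, ← combine_player pm2 p2 c2 hpm2 hp2 hs_c2]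
  ring

end Helpers

/-- **Corollary 1.** Along a differentiable full-support trajectory (for `t ≥ 0`)
of the replicator–mutator dynamics, with `π^μ` a stationary point and
`ξ = min_{i,a_i} c_i(a_i)/π_i^μ(a_i)`, the trajectory converges to the stationary point
exponentially fast: `KL(π^μ, π^t) ≤ KL(π^μ, π^0) exp(−μ ξ t)` for all `t ≥ 0`. -/
theorem rmd_kl_exponential_convergence
    [Fintype A1] [Fintype A2] [Nonempty A1] [Nonempty A2]
    (u1 u2 : A1 → A2 → ℝ) (hzs : ∀ a1 a2, u2 a1 a2 = -u1 a1 a2)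
    (μ : ℝ) (hμ : 0 < μ)
    (c1 : A1 → ℝ) (c2 : A2 → ℝ)
    (hc1 : c1 ∈ stdSimplex ℝ A1) (hc1pos : ∀ a, 0 < c1 a)
    (hc2 : c2 ∈ stdSimplex ℝ A2) (hc2pos : ∀ a, 0 < c2 a)
    (π1 : ℝ → A1 → ℝ) (π2 : ℝ → A2 → ℝ)
    (hmem1 : ∀ t, 0 ≤ t → π1 t ∈ stdSimplex ℝ A1) (hpos1 : ∀ t, 0 ≤ t → ∀ a, 0 < π1 t a)
    (hmem2 : ∀ t, 0 ≤ t → π2 t ∈ stdSimplex ℝ A2) (hpos2 : ∀ t, 0 ≤ t → ∀ a, 0 < π2 t a)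
    (hrmd1 : ∀ t, 0 ≤ t → ∀ a, HasDerivAt (fun s => π1 s a)
      (π1 t a * (cV1 u1 (π2 t) a - eV u1 (π1 t) (π2 t)) + μ * (c1 a - π1 t a)) t)
    (hrmd2 : ∀ t, 0 ≤ t → ∀ a, HasDerivAt (fun s => π2 s a)
      (π2 t a * (cV2 u2 (π1 t) a - eV u2 (π1 t) (π2 t)) + μ * (c2 a - π2 t a)) t)
    (π1μ : A1 → ℝ) (π2μ : A2 → ℝ)
    (hπ1μ : π1μ ∈ stdSimplex ℝ A1) (hπ2μ : π2μ ∈ stdSimplex ℝ A2)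
    (hst1 : ∀ a, π1μ a * (cV1 u1 π2μ a - eV u1 π1μ π2μ) + μ * (c1 a - π1μ a) = 0)
    (hst2 : ∀ a, π2μ a * (cV2 u2 π1μ a - eV u2 π1μ π2μ) + μ * (c2 a - π2μ a) = 0)
    (ξ : ℝ)
    (hξ : ξ = min (Finset.univ.inf' Finset.univ_nonempty fun a => c1 a / π1μ a)
                  (Finset.univ.inf' Finset.univ_nonempty fun a => c2 a / π2μ a)) :
    ∀ t, 0 ≤ t → KLd π1μ (π1 t) + KLd π2μ (π2 t) ≤
      (KLd π1μ (π1 0) + KLd π2μ (π2 0)) * Real.exp (-μ * ξ * t) := by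
  -- positivity of the stationary point
  have hπ1μpos : ∀ a, 0 < π1μ a := by
    intro a
    rcases (hπ1μ.1 a).lt_or_eq with h | h
    · exact h
    · exfalso
      have h0 := hst1 a
      rw [← h] at h0
      simp at h0
      rcases h0 with h0 | h0
      · exact hμ.ne' h0
      · exact (hc1pos a).ne' h0
  have hπ2μpos : ∀ a, 0 < π2μ a := by
    intro a
    rcases (hπ2μ.1 a).lt_or_eq with h | h
    · exact h
    · exfalso
      have h0 := hst2 a
      rw [← h] at h0
      simp at h0
      rcases h0 with h0 | h0
      · exact hμ.ne' h0
      · exact (hc2pos a).ne' h0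
  -- properties of ξ
  have hξ1 : ∀ a, ξ ≤ c1 a / π1μ a := fun a =>
    le_trans (b := Finset.univ.inf' Finset.univ_nonempty fun a => c1 a / π1μ a) (by rw [hξ]; exact min_le_left _ _) (Finset.inf'_le _ (Finset.mem_univ a))
  have hξ2 : ∀ a, ξ ≤ c2 a / π2μ a := fun a =>
    le_trans (b := Finset.univ.inf' Finset.univ_nonempty fun a => c2 a / π2μ a) (by rw [hξ]; exact min_le_right _ _) (Finset.inf'_le _ (Finset.mem_univ a))
  have hξpos : 0 < ξ := by
    rw [hξ]
    apply lt_min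
    · exact (Finset.lt_inf'_iff _).mpr fun a _ => div_pos (hc1pos a) (hπ1μpos a)
    · exact (Finset.lt_inf'_iff _).mpr fun a _ => div_pos (hc2pos a) (hπ2μpos a)
  -- the Lyapunov function and its derivative
  set V : ℝ → ℝ := fun s => KLd π1μ (π1 s) + KLd π2μ (π2 s) with hV
  set S : ℝ → ℝ := fun t =>
    (∑ a, π1μ a * ((π1 t a * (cV1 u1 (π2 t) a - eV u1 (π1 t) (π2 t))
        + μ * (c1 a - π1 t a)) / π1 t a))
      + (∑ a, π2μ a * ((π2 t a * (cV2 u2 (π1 t) a - eV u2 (π1 t) (π2 t))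
        + μ * (c2 a - π2 t a)) / π2 t a)) with hS
  have hVd : ∀ t, 0 ≤ t → HasDerivAt V (-(S t)) t := by
    intro t ht
    have H1 : HasDerivAt (fun s => KLd π1μ (π1 s))
        (∑ a, -(π1μ a * ((π1 t a * (cV1 u1 (π2 t) a - eV u1 (π1 t) (π2 t))
          + μ * (c1 a - π1 t a)) / π1 t a))) t := by
      apply HasDerivAt.fun_sum
      intro a _
      have hd := hrmd1 t ht a
      have hne : π1 t a ≠ 0 := (hpos1 t ht a).ne'
      have hq := (hasDerivAt_const t (π1μ a)).fun_div hd hne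
      have hlog := hq.log (div_ne_zero (hπ1μpos a).ne' hne)
      have := hlog.const_mul (π1μ a)
      refine this.congr_deriv ?_
      have h1 := (hπ1μpos a).ne'
      field_simp
      ring
    have H2 : HasDerivAt (fun s => KLd π2μ (π2 s))
        (∑ a, -(π2μ a * ((π2 t a * (cV2 u2 (π1 t) a - eV u2 (π1 t) (π2 t))
          + μ * (c2 a - π2 t a)) / π2 t a))) t := by
      apply HasDerivAt.fun_sum
      intro a _
      have hd := hrmd2 t ht a
      have hne : π2 t a ≠ 0 := (hpos2 t ht a).ne'
      have hq := (hasDerivAt_const t (π2μ a)).fun_div hd hne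
      have hlog := hq.log (div_ne_zero (hπ2μpos a).ne' hne)
      have := hlog.const_mul (π2μ a)
      refine this.congr_deriv ?_
      have h1 := (hπ2μpos a).ne'
      field_simp
      ring
    have := H1.fun_add H2
    refine this.congr_deriv ?_
    rw [hS]
    simp only [Finset.sum_neg_distrib]
    ring
  -- the key differential inequality
  have hkey : ∀ t, 0 ≤ t → -(S t) ≤ -(μ * ξ * V t) := by
    intro t ht
    have hid := grand_identity u1 u2 hzs μ c1 (π1 t) π1μ c2 (π2 t) π2μ
      (fun a => (hπ1μpos a).ne') (fun a => (hπ2μpos a).ne')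
      (fun a => (hpos1 t ht a).ne') (fun a => (hpos2 t ht a).ne')
      (hmem1 t ht).2 (hmem2 t ht).2 hπ1μ.2 hπ2μ.2 hc1.2 hc2.2 hst1 hst2
    have hb1 := player_bound π1μ (π1 t) c1 ξ hπ1μpos (hpos1 t ht) hπ1μ.2
      (hmem1 t ht).2 hξpos.le hξ1
    have hb2 := player_bound π2μ (π2 t) c2 ξ hπ2μpos (hpos2 t ht) hπ2μ.2
      (hmem2 t ht).2 hξpos.le hξ2
    have hSt : S t = μ * ((∑ a, c1 a * (π1 t a / π1μ a + π1μ a / π1 t a - 2))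
        + (∑ a, c2 a * (π2 t a / π2μ a + π2μ a / π2 t a - 2))) := hid
    have hVt : V t = KLd π1μ (π1 t) + KLd π2μ (π2 t) := rfl
    have hadd : ξ * KLd π1μ (π1 t) + ξ * KLd π2μ (π2 t)
        ≤ (∑ a, c1 a * (π1 t a / π1μ a + π1μ a / π1 t a - 2))
          + (∑ a, c2 a * (π2 t a / π2μ a + π2μ a / π2 t a - 2)) := add_le_add hb1 hb2
    have := mul_le_mul_of_nonneg_left hadd hμ.le
    have : μ * ξ * V t ≤ S t := by
      rw [hSt, hVt]
      nlinarith
    linarith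
  -- the rescaled function is antitone
  set W : ℝ → ℝ := fun s => V s * Real.exp (μ * ξ * s) with hW
  have hWd : ∀ t, 0 ≤ t → HasDerivAt W
      (-(S t) * Real.exp (μ * ξ * t) + V t * (Real.exp (μ * ξ * t) * (μ * ξ))) t := by
    intro t ht
    have he : HasDerivAt (fun s => Real.exp (μ * ξ * s)) (Real.exp (μ * ξ * t) * (μ * ξ)) t := by
      have hlin : HasDerivAt (fun s : ℝ => μ * ξ * s) (μ * ξ) t := by
        simpa using (hasDerivAt_id t).const_mul (μ * ξ)
      exact hlin.exp
    exact (hVd t ht).mul he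
  have hmono : AntitoneOn W (Set.Ici (0 : ℝ)) := by
    apply antitoneOn_of_deriv_nonpos (convex_Ici 0)
    · intro x hx
      exact ((hWd x hx).continuousAt).continuousWithinAt
    · rw [interior_Ici]
      intro x hx
      exact ((hWd x (le_of_lt hx)).differentiableAt).differentiableWithinAt
    · rw [interior_Ici]
      intro x hx
      rw [(hWd x hx.le).deriv]
      have h1 := hkey x hx.le
      have h2 := Real.exp_pos (μ * ξ * x)
      have : -(S x) * Real.exp (μ * ξ * x) + V x * (Real.exp (μ * ξ * x) * (μ * ξ))
          ≤ (-(μ * ξ * V x)) * Real.exp (μ * ξ * x) + V x * (Real.exp (μ * ξ * x) * (μ * ξ)) := by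
        have := mul_le_mul_of_nonneg_right h1 h2.le
        linarith
      calc _ ≤ (-(μ * ξ * V x)) * Real.exp (μ * ξ * x)
            + V x * (Real.exp (μ * ξ * x) * (μ * ξ)) := this
        _ = 0 := by ring
  -- conclude
  intro t ht
  have h := hmono (Set.self_mem_Ici) (Set.mem_Ici.mpr ht) ht
  have hW0 : W 0 = V 0 := by
    rw [hW]; simp
  have hWt : W t = V t * Real.exp (μ * ξ * t) := rfl
  rw [hW0, hWt] at h
  have hE := Real.exp_pos (μ * ξ * t)
  have heq : Real.exp (-μ * ξ * t) = (Real.exp (μ * ξ * t))⁻¹ := by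
    rw [show -μ * ξ * t = -(μ * ξ * t) by ring, Real.exp_neg]
  have hfin : V t ≤ V 0 * (Real.exp (μ * ξ * t))⁻¹ := by
    rw [← div_eq_mul_inv, le_div_iff₀ hE]
    exact h
  rw [heq]
  exact hfin
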